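/- Let n ≥ 1, c > 0, α ∈ (0,1), and suppose ((α²c²/(n+c²))^{1/n}·(n+c²) − c²) > 0. For data x₁,…,x_n with sample mean x̄ and V = ∑x_i², and any μ₀ ∈ ℝ, the inequality √(c²/(n+c²)) · (1 − (S − nμ₀)²/((n+c²)(V − 2Sμ₀ + nμ₀²)))^{−n/2} ≤ 1/α (with S = ∑x_i) is equivalent to (μ₀ − x̄)² ≤ [(n+c²)(1 − (α²c²/(n+c²))^{1/n}) / ((α²c²/(n+c²))^{1/n}(n+c²) − c²)] · (V/n − x̄²). -/

import Mathlib

/-- The level-`1/α` threshold crossing of the Gaussian-mixture scale-invariant t-test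
martingale (with data shifted by `μ₀`) is equivalent to the explicit confidence interval:
`√(c²/(n+c²)) (1 − (S−nμ₀)²/((n+c²)(V−2Sμ₀+nμ₀²)))^{−n/2} ≤ 1/α` iff
`(μ₀ − x̄)² ≤ [(n+c²)(1 − (α²c²/(n+c²))^{1/n}) / ((α²c²/(n+c²))^{1/n}(n+c²) − c²)] (V/n − x̄²)`
where `x̄ = S/n`. -/
theorem stmt_15 (n : ℕ) (hn : 1 ≤ n) (c : ℝ) (hc : 0 < c) (α : ℝ) (hα : α ∈ Set.Ioo (0:ℝ) 1)
    (hden : 0 < (α ^ 2 * c ^ 2 / (n + c ^ 2)) ^ ((1 : ℝ) / n) * (n + c ^ 2) - c ^ 2)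
    (S V μ₀ : ℝ)
    (hq : 0 < V - 2 * S * μ₀ + n * μ₀ ^ 2)
    (hlt : (S - n * μ₀) ^ 2 < (n + c ^ 2) * (V - 2 * S * μ₀ + n * μ₀ ^ 2)) :
    (Real.sqrt (c ^ 2 / (n + c ^ 2)) *
        (1 - (S - n * μ₀) ^ 2 / ((n + c ^ 2) * (V - 2 * S * μ₀ + n * μ₀ ^ 2)))
          ^ (-(n : ℝ) / 2) ≤ 1 / α)
    ↔ (μ₀ - S / n) ^ 2
        ≤ ((n + c ^ 2) * (1 - (α ^ 2 * c ^ 2 / (n + c ^ 2)) ^ ((1 : ℝ) / n)) /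
            ((α ^ 2 * c ^ 2 / (n + c ^ 2)) ^ ((1 : ℝ) / n) * (n + c ^ 2) - c ^ 2)) *
          (V / n - (S / n) ^ 2) := by
  obtain ⟨hα0, hα1⟩ := hα
  have hnpos : (0:ℝ) < n := by exact_mod_cast Nat.lt_of_lt_of_le Nat.zero_lt_one hn
  have hnne : (n:ℝ) ≠ 0 := ne_of_gt hnpos
  set N : ℝ := (n:ℝ) + c ^ 2 with hNdef
  have hNpos : 0 < N := by positivity
  set Q : ℝ := V - 2 * S * μ₀ + n * μ₀ ^ 2 with hQdef
  set D : ℝ := (S - n * μ₀) ^ 2 with hDdef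
  have hDnn : 0 ≤ D := sq_nonneg _
  have hNQ : 0 < N * Q := mul_pos hNpos hq
  set r : ℝ := 1 - D / (N * Q) with hrdef
  have hrpos : 0 < r := by
    have : D / (N * Q) < 1 := (div_lt_one hNQ).2 hlt
    simp only [hrdef]; linarith
  set x : ℝ := α ^ 2 * c ^ 2 / N with hxdef
  have hxpos : 0 < x := by positivity
  set β : ℝ := x ^ ((1:ℝ) / n) with hβdef
  have hβpos : 0 < β := Real.rpow_pos_of_pos hxpos _
  have hβn : β ^ ((n:ℝ)) = x := by
    rw [hβdef, ← Real.rpow_mul hxpos.le, one_div_mul_cancel hnne, Real.rpow_one]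
  set d : ℝ := β * N - c ^ 2 with hddef
  have hd : 0 < d := hden
  -- Step 1: the martingale inequality is equivalent to β ≤ r
  have step1 : (Real.sqrt (c ^ 2 / N) * r ^ (-(n:ℝ) / 2) ≤ 1 / α) ↔ β ≤ r := by
    have hspos : 0 < Real.sqrt (c ^ 2 / N) := Real.sqrt_pos.2 (by positivity)
    have hrn2 : 0 < r ^ ((n:ℝ) / 2) := Real.rpow_pos_of_pos hrpos _
    rw [neg_div, Real.rpow_neg hrpos.le, ← div_eq_mul_inv,
      div_le_div_iff₀ hrn2 hα0, one_mul]
    rw [show (Real.sqrt (c ^ 2 / N) * α ≤ r ^ ((n:ℝ)/2))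
        ↔ ((Real.sqrt (c ^ 2 / N) * α) ^ ((2:ℝ)) ≤ (r ^ ((n:ℝ)/2)) ^ ((2:ℝ))) from
      (Real.rpow_le_rpow_iff (by positivity) hrn2.le two_pos).symm]
    have e1 : (Real.sqrt (c ^ 2 / N) * α) ^ ((2:ℝ)) = x := by
      rw [Real.rpow_two, mul_pow, Real.sq_sqrt (by positivity : (0:ℝ) ≤ c^2/N), hxdef]
      ring
    have e2 : (r ^ ((n:ℝ)/2)) ^ ((2:ℝ)) = r ^ ((n:ℝ)) := by
      rw [← Real.rpow_mul hrpos.le]; norm_num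
    rw [e1, e2, ← hβn]
    exact Real.rpow_le_rpow_iff hβpos.le hrpos.le hnpos
  rw [step1]
  -- Step 2: the algebra
  have eD : (μ₀ - S / (n:ℝ)) ^ 2 * (n:ℝ) ^ 2 = D := by
    rw [hDdef, ← mul_pow, show (μ₀ - S/(n:ℝ)) * (n:ℝ) = (n:ℝ)*μ₀ - S by field_simp]
    ring
  have eM : (V / (n:ℝ) - (S/(n:ℝ)) ^ 2) * (n:ℝ) ^ 2 = (n:ℝ) * V - S ^ 2 := by
    field_simp
  have key : (n:ℝ) * ((1 - β) * (N * Q) - D)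
      = N * (1 - β) * ((n:ℝ) * V - S ^ 2) - D * d := by
    rw [hQdef, hDdef, hNdef, hddef, hNdef]; ring
  have hA : (β ≤ r) ↔ D ≤ (1 - β) * (N * Q) := by
    rw [hrdef, show (β ≤ 1 - D / (N*Q)) ↔ D / (N*Q) ≤ 1 - β from by
      constructor <;> intro <;> linarith, div_le_iff₀ hNQ]
  have hC : (D ≤ (1 - β) * (N * Q)) ↔ D * d ≤ N * (1 - β) * ((n:ℝ) * V - S ^ 2) := by
    constructor
    · intro h
      have h2 := mul_le_mul_of_nonneg_left h hnpos.le
      linarith [key, h2]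
    · intro h
      have h3 : (n:ℝ) * D ≤ (n:ℝ) * ((1 - β) * (N * Q)) := by
        have h4 := mul_le_mul_of_nonneg_left h (le_refl (0:ℝ)) -- unused
        linarith [key, h]
      exact le_of_mul_le_mul_left h3 hnpos
  rw [hA, hC, div_mul_eq_mul_div, le_div_iff₀ hd]
  rw [show ((μ₀ - S/(n:ℝ))^2 * d ≤ N * (1-β) * (V/(n:ℝ) - (S/(n:ℝ))^2))
      ↔ ((μ₀ - S/(n:ℝ))^2 * d * (n:ℝ)^2 ≤ N * (1-β) * (V/(n:ℝ) - (S/(n:ℝ))^2) * (n:ℝ)^2) from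
    (mul_le_mul_iff_of_pos_right (by positivity)).symm]
  rw [show (μ₀ - S/(n:ℝ))^2 * d * (n:ℝ)^2 = D * d by rw [← eD]; ring,
    show N * (1-β) * (V/(n:ℝ) - (S/(n:ℝ))^2) * (n:ℝ)^2 = N * (1-β) * ((n:ℝ)*V - S^2) by
      rw [← eM]; ring]
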